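/- Let ◁ be a ramified strict partial order on a set V such that the set {u ∈ V : u ◁ v} is countable for every v ∈ V. Then there is a partition V = ⋃_{n < ω} V_n into countably many pieces such that the restriction of ◁ to each V_n is well-founded (and hence each (V_n, ◁) is a tree of height at most ω1). -/

import Mathlib

universe u

open Cardinal Set

theorem galvin_aux {V : Type u} (lt : V → V → Prop)
    (hirr : ∀ v, ¬ lt v v) (htr : ∀ a b c : V, lt a b → lt b c → lt a c)
    (hctbl : ∀ v : V, {u : V | lt u v}.Countable) (c : Cardinal.{u}) :
    ∀ s : Set V, #(↥s) = c →
      ∃ f : V → ℕ, ∀ n : ℕ, ¬∃ g : ℕ → V,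
        (∀ k, g k ∈ s) ∧ (∀ k, f (g k) = n) ∧ ∀ k, lt (g (k + 1)) (g k) := by
  induction c using Cardinal.lt_wf.induction with
  | _ c IH =>
  intro s hs
  subst hs
  classical
  by_cases hcnt : s.Countable
  · -- countable case: injective coloring
    haveI : Countable ↥s := hcnt.to_subtype
    obtain ⟨f0, hf0⟩ := Countable.exists_injective_nat ↥s
    refine ⟨fun v => if h : v ∈ s then f0 ⟨v, h⟩ else 0, ?_⟩
    rintro n ⟨g, hmem, hcol, hdesc⟩
    have h0 : (if h : g 0 ∈ s then f0 ⟨g 0, h⟩ else 0) = n := hcol 0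
    have h1 : (if h : g 1 ∈ s then f0 ⟨g 1, h⟩ else 0) = n := hcol 1
    rw [dif_pos (hmem 0)] at h0
    rw [dif_pos (hmem 1)] at h1
    have : (⟨g 0, hmem 0⟩ : ↥s) = ⟨g 1, hmem 1⟩ := hf0 (h0.trans h1.symm)
    have hg01 : g 0 = g 1 := congrArg Subtype.val this
    have := hdesc 0
    rw [← hg01] at this
    exact hirr _ this
  · -- uncountable case
    have hκ : ℵ₀ < #(↥s) := by
      rw [← not_le]
      exact fun h => hcnt (le_aleph0_iff_set_countable.mp h)
    obtain ⟨e⟩ : Nonempty (↥s ≃ (#(↥s)).ord.ToType) :=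
      Cardinal.eq.mp (by rw [Cardinal.mk_toType, Cardinal.card_ord])
    set K := (#(↥s)).ord.ToType with hK
    -- downward-closed pieces
    set M : K → Set V := fun x => {u | ∃ v : ↥s, e v ≤ x ∧ (u = ↑v ∨ lt u ↑v)} with hM
    have hmem_self : ∀ v : ↥s, (v : V) ∈ M (e v) := fun v => ⟨v, le_refl _, Or.inl rfl⟩
    have hdc : ∀ (x : K) (u w : V), lt u w → w ∈ M x → u ∈ M x := by
      rintro x u w hlt ⟨v, hle, (rfl | hv)⟩
      exacts [⟨v, hle, Or.inr hlt⟩, ⟨v, hle, Or.inr (htr _ _ _ hlt hv)⟩]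
    -- cardinality of pieces
    have hMcard : ∀ x : K, #(M x) < #(↥s) := by
      intro x
      have hsub : M x ⊆ (Subtype.val '' (e ⁻¹' Iic x)) ∪
          ⋃ v : (e ⁻¹' Iic x : Set ↥s), {u | lt u ↑(v : ↥s)} := by
        rintro u ⟨v, hle, (rfl | hv)⟩
        · exact Or.inl ⟨v, hle, rfl⟩
        · exact Or.inr (mem_iUnion.mpr ⟨⟨v, hle⟩, hv⟩)
      have hA : #(e ⁻¹' Iic x) < #(↥s) := by
        have h1 : #(e ⁻¹' Iic x) ≤ #(Iic x) := by
          rw [← Equiv.image_symm_eq_preimage]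
          exact mk_image_le
        have h2 : #(Iic x) ≤ #(Iio x) + 1 := by
          rw [← Set.Iio_insert]
          exact mk_insert_le
        have h3 : #(Iio x) < #(↥s) := Cardinal.mk_Iio_ord_toType x
        exact lt_of_le_of_lt (h1.trans h2)
          (Cardinal.add_lt_of_lt hκ.le h3 (one_lt_aleph0.trans hκ))
      have h1 : #(Subtype.val '' (e ⁻¹' Iic x)) < #(↥s) :=
        lt_of_le_of_lt mk_image_le hA
      have h2 : #(⋃ v : (e ⁻¹' Iic x : Set ↥s), {u | lt u ↑(v : ↥s)}) < #(↥s) := by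
        refine lt_of_le_of_lt (Cardinal.mk_iUnion_le _) ?_
        refine Cardinal.mul_lt_of_lt hκ.le hA (lt_of_le_of_lt ?_ hκ)
        exact ciSup_le' fun v => (hctbl _).le_aleph0
      exact lt_of_le_of_lt (mk_le_mk_of_subset hsub)
        (lt_of_le_of_lt (mk_union_le _ _) (Cardinal.add_lt_of_lt hκ.le h1 h2))
    -- level function
    have wf : WellFounded ((· < ·) : K → K → Prop) := wellFounded_lt
    set ℓ : ↥s → K := fun v => wf.min {x | (v : V) ∈ M x} ⟨e v, hmem_self v⟩ with hℓ
    have hℓmem : ∀ v : ↥s, (v : V) ∈ M (ℓ v) := fun v => wf.min_mem {x | (v : V) ∈ M x} ⟨e v, hmem_self v⟩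
    have hℓle : ∀ (v : ↥s) (x : K), (v : V) ∈ M x → ℓ v ≤ x := fun v x h =>
      not_lt.mp (wf.not_lt_min {y | (v : V) ∈ M y} h)
    have hℓmono : ∀ u v : ↥s, lt ↑u ↑v → ℓ u ≤ ℓ v := fun u v hlt =>
      hℓle u _ (hdc _ _ _ hlt (hℓmem v))
    -- layers
    set L : K → Set V := fun x => {v | ∃ h : v ∈ s, ℓ ⟨v, h⟩ = x} with hL
    have hLsub : ∀ x, L x ⊆ M x := by
      rintro x v ⟨hv, rfl⟩
      exact hℓmem _
    have hF : ∀ x : K, ∃ f : V → ℕ, ∀ n : ℕ, ¬∃ g : ℕ → V,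
        (∀ k, g k ∈ L x) ∧ (∀ k, f (g k) = n) ∧ ∀ k, lt (g (k + 1)) (g k) :=
      fun x => IH #(L x) (lt_of_le_of_lt (mk_le_mk_of_subset (hLsub x)) (hMcard x)) (L x) rfl
    choose F hFspec using hF
    refine ⟨fun v => if h : v ∈ s then F (ℓ ⟨v, h⟩) v else 0, ?_⟩
    rintro n ⟨g, hgmem, hgcol, hgdesc⟩
    -- strict descent over gaps
    have hmono0 : ∀ j m, lt (g (j + m + 1)) (g j) := by
      intro j m
      induction m with
      | zero => exact hgdesc j
      | succ m ih => exact htr _ _ _ (hgdesc (j + m + 1)) ih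
    have hmono : ∀ j k, j < k → lt (g k) (g j) := by
      intro j k h
      obtain ⟨m, rfl⟩ : ∃ m, k = j + m + 1 := ⟨k - j - 1, by omega⟩
      exact hmono0 j m
    set ℓg : ℕ → K := fun k => ℓ ⟨g k, hgmem k⟩ with hℓg
    have hℓgmono : ∀ j k, j ≤ k → ℓg k ≤ ℓg j := by
      intro j k h
      rcases eq_or_lt_of_le h with rfl | h'
      · exact le_refl _
      · exact hℓmono _ _ (hmono j k h')
    obtain ⟨Kk, hKk⟩ : ∃ Kk, ℓg Kk = wf.min (Set.range ℓg) ⟨ℓg 0, 0, rfl⟩ := by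
      have := wf.min_mem (Set.range ℓg) ⟨ℓg 0, 0, rfl⟩
      obtain ⟨k, hk⟩ := this
      exact ⟨k, hk⟩
    have hconst : ∀ k, Kk ≤ k → ℓg k = ℓg Kk := by
      intro k hk
      refine le_antisymm (hℓgmono _ _ hk) ?_
      rw [hKk]
      exact not_lt.mp (wf.not_lt_min _ (⟨k, rfl⟩ : ∃ k0, ℓg k0 = ℓg k))
    refine hFspec (ℓg Kk) n ⟨fun k => g (Kk + k), ?_, ?_, ?_⟩
    · intro k
      exact ⟨hgmem _, hconst _ (Nat.le_add_right _ _)⟩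
    · intro k
      have h2 : (if h : g (Kk + k) ∈ s then F (ℓ ⟨g (Kk + k), h⟩) (g (Kk + k)) else 0) = n :=
        hgcol (Kk + k)
      rw [dif_pos (hgmem (Kk + k))] at h2
      rwa [show ℓ ⟨g (Kk + k), hgmem (Kk + k)⟩ = ℓg Kk from hconst _ (Nat.le_add_right _ _)] at h2
    · intro k
      exact hgdesc (Kk + k)

/-- Galvin's lemma: if `◁` is a ramified strict partial order on `V` with all sets of
strict predecessors countable, then `V` can be partitioned into countably many
pieces on each of which `◁` is well-founded (so each piece is a tree of height at
most `ω₁`). -/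
theorem galvin_partition {V : Type u} (lt : V → V → Prop)
    (hso : IsStrictOrder V lt)
    (hram : ∀ v u w : V, lt u v → lt w v → (lt u w ∨ u = w ∨ lt w u))
    (hctbl : ∀ v : V, {u : V | lt u v}.Countable) :
    ∃ f : V → ℕ, ∀ n : ℕ,
      ¬∃ g : ℕ → V, (∀ k, f (g k) = n) ∧ ∀ k, lt (g (k + 1)) (g k) := by
  obtain ⟨f, hf⟩ := galvin_aux lt (fun v => hso.toIrrefl.irrefl v)
    (fun a b c => hso.toIsTrans.trans a b c) hctbl #(↥(Set.univ : Set V)) Set.univ rfl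
  refine ⟨f, fun n h => ?_⟩
  obtain ⟨g, hcol, hdesc⟩ := h
  exact hf n ⟨g, fun k => Set.mem_univ _, hcol, hdesc⟩
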